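/- Let S be a string and R an aperiodic substring of S (i.e., the smallest period of R is strictly greater than |R|/2). For any three distinct occurrences of R in S starting at positions x < y < z, we have z > x + |R|. -/

import Mathlib

open Classical

/-- `p` is a period of the string (list) `P`. -/
def IsPeriodOf {α : Type*} (P : List α) (p : ℕ) : Prop :=
  0 < p ∧ ∀ i, i + p < P.length → P[i]? = P[i + p]?

/-- The smallest period of `P`. -/
noncomputable def minPeriod {α : Type*} (P : List α) : ℕ := sInf {p | IsPeriodOf P p}

/-- `P` is periodic if its smallest period is at most `|P|/2`. -/
def ListPeriodic {α : Type*} (P : List α) : Prop := 2 * minPeriod P ≤ P.length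

/-- `P` occurs in `S` starting at position `i`. -/
def OccursAt {α : Type*} (P S : List α) (i : ℕ) : Prop :=
  i + P.length ≤ S.length ∧ (S.drop i).take P.length = P

/-- The set of starting positions of occurrences of `P` in `S`. -/
noncomputable def occ {α : Type*} (P S : List α) : Finset ℕ :=
  (Finset.range (S.length + 1)).filter (fun i => OccursAt P S i)

/-- Hamming distance between two (equal-length) strings. -/
noncomputable def hamming {α : Type*} (S T : List α) : ℕ :=
  ((List.range S.length).filter (fun i => S[i]? ≠ T[i]?)).length

/-- `P` is `(τ,k)`-resilient in `S`. -/
def Resilient {α : Type*} (P S : List α) (τ k : ℕ) : Prop :=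
  ∀ S' : List α, S'.length = S.length → hamming S S' ≤ k → τ ≤ (occ P S').card

/-- The fragment `S[x..y]` (inclusive). -/
def frag {α : Type*} (S : List α) (x y : ℕ) : List α := (S.drop x).take (y - x + 1)

/-- The fragment `S[x..y]` is a run of `S`. -/
def IsRun {α : Type*} (S : List α) (x y : ℕ) : Prop :=
  x ≤ y ∧ y < S.length ∧ 2 * minPeriod (frag S x y) ≤ y - x + 1 ∧
  (0 < x → ¬ IsPeriodOf (frag S (x - 1) y) (minPeriod (frag S x y))) ∧
  (y + 1 < S.length → ¬ IsPeriodOf (frag S x (y + 1)) (minPeriod (frag S x y)))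

lemma occursAt_get {α : Type*} {R S : List α} {x : ℕ} (h : OccursAt R S x)
    {i : ℕ} (hi : i < R.length) : R[i]? = S[x + i]? := by
  obtain ⟨_, h2⟩ := h
  conv_lhs => rw [← h2]
  simp [List.getElem?_take, List.getElem?_drop, hi]

lemma period_of_two_occ {α : Type*} {R S : List α} {x y : ℕ}
    (hx : OccursAt R S x) (hy : OccursAt R S y) (hxy : x < y) :
    IsPeriodOf R (y - x) := by
  refine ⟨Nat.sub_pos_of_lt hxy, fun i hi => ?_⟩
  have h1 : R[i]? = S[y + i]? := occursAt_get hy (by omega)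
  have h2 : R[i + (y - x)]? = S[x + (i + (y - x))]? := occursAt_get hx hi
  rw [h1, h2]
  congr 1
  omega

theorem stmt1 {α : Type*} (S R : List α) (hap : ¬ ListPeriodic R)
    (x y z : ℕ) (hx : OccursAt R S x) (hy : OccursAt R S y) (hz : OccursAt R S z)
    (hxy : x < y) (hyz : y < z) :
    x + R.length < z := by
  rcases Nat.eq_zero_or_pos R.length with h0 | h0
  · omega
  have hap' : R.length < 2 * minPeriod R := by
    simpa [ListPeriodic] using hap
  have hp1 : minPeriod R ≤ y - x := Nat.sInf_le (period_of_two_occ hx hy hxy)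
  have hp2 : minPeriod R ≤ z - y := Nat.sInf_le (period_of_two_occ hy hz hyz)
  omega
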